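/- (Proposition 3.1.) Let a₂₂, a₅₀, b₁₃, b₄₁ be real numbers and let u₂ : ℝ → ℝ be any differentiable function with u₂(0) = 0 satisfying, for all real θ, u₂′(θ) = cos θ·(2cos²θ + 3sin²θ)·(3a₅₀cos⁹θ + 3a₂₂cos⁶θ·sin²θ + 2b₄₁cos³θ·sin⁴θ + 2b₁₃sin⁶θ) / (36·(cos⁶θ + sin⁴θ)^{25/12}). Then u₂(2π) = (1/60)·(5a₅₀ + b₄₁)·∫₀^{2π} cos¹⁰φ·(2cos²φ + 3sin²φ)·(cos⁶φ + sin⁴φ)^{−25/12} dφ. In particular the first focal value ν₂(2π) of the origin of the 2:3 homogeneous weight system equals this quantity. -/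

import Mathlib

open Real

private lemma ffv_Dpos (θ : ℝ) : 0 < Real.cos θ ^ 6 + Real.sin θ ^ 4 := by
  by_cases hs : Real.sin θ = 0
  · have h2 : Real.cos θ ^ 2 = 1 := by nlinarith [sin_sq_add_cos_sq θ]
    have h3 : Real.cos θ ^ 6 = 1 := by
      calc Real.cos θ ^ 6 = (Real.cos θ ^ 2) ^ 3 := by ring
      _ = 1 := by rw [h2]; norm_num
    have h4 : (0:ℝ) ≤ Real.sin θ ^ 4 := by positivity
    linarith
  · have h1 : 0 < Real.sin θ ^ 4 := by positivity
    have h2 : 0 ≤ Real.cos θ ^ 6 := by positivity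
    linarith

private lemma ffv_contD : Continuous fun θ : ℝ => Real.cos θ ^ 6 + Real.sin θ ^ 4 := by
  continuity

private lemma ffv_contP (p : ℝ) :
    Continuous fun θ : ℝ => (Real.cos θ ^ 6 + Real.sin θ ^ 4) ^ p :=
  ffv_contD.rpow_const fun x => Or.inl (ffv_Dpos x).ne'

/-- vanishing of the integral of a `π`-antiperiodic continuous function over a full period -/
private lemma ffv_odd (f : ℝ → ℝ) (hc : Continuous f) (hodd : ∀ x, f (x + π) = - f x) :
    ∫ x in (0:ℝ)..(2*π), f x = 0 := by
  have h1 : ∫ x in (0:ℝ)..(2*π), f x = (∫ x in (0:ℝ)..π, f x) + ∫ x in π..(2*π), f x :=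
    (intervalIntegral.integral_add_adjacent_intervals (hc.intervalIntegrable _ _)
      (hc.intervalIntegrable _ _)).symm
  have h2 : ∫ x in (0:ℝ)..π, f (x + π) = ∫ x in π..(2*π), f x := by
    rw [intervalIntegral.integral_comp_add_right f π]
    norm_num [two_mul]
  have h3 : ∫ x in (0:ℝ)..π, f (x + π) = - ∫ x in (0:ℝ)..π, f x := by
    simp only [hodd]
    exact intervalIntegral.integral_neg
  rw [h1, ← h2, h3]; ring

private noncomputable def ffvG (φ : ℝ) : ℝ :=
  Real.cos φ ^ 10 * (2 * Real.cos φ ^ 2 + 3 * Real.sin φ ^ 2) *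
    (Real.cos φ ^ 6 + Real.sin φ ^ 4) ^ (-(25 : ℝ) / 12)

private noncomputable def ffvG2 (φ : ℝ) : ℝ :=
  Real.cos φ ^ 7 * Real.sin φ ^ 2 * (2 * Real.cos φ ^ 2 + 3 * Real.sin φ ^ 2) *
    (Real.cos φ ^ 6 + Real.sin φ ^ 4) ^ (-(25 : ℝ) / 12)

private noncomputable def ffvG4 (φ : ℝ) : ℝ :=
  Real.cos φ ^ 4 * Real.sin φ ^ 4 * (2 * Real.cos φ ^ 2 + 3 * Real.sin φ ^ 2) *
    (Real.cos φ ^ 6 + Real.sin φ ^ 4) ^ (-(25 : ℝ) / 12)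

private noncomputable def ffvG6 (φ : ℝ) : ℝ :=
  Real.cos φ * Real.sin φ ^ 6 * (2 * Real.cos φ ^ 2 + 3 * Real.sin φ ^ 2) *
    (Real.cos φ ^ 6 + Real.sin φ ^ 4) ^ (-(25 : ℝ) / 12)

private lemma ffv_contG : Continuous ffvG :=
  ((by continuity : Continuous fun φ : ℝ =>
    Real.cos φ ^ 10 * (2 * Real.cos φ ^ 2 + 3 * Real.sin φ ^ 2))).mul (ffv_contP _)

private lemma ffv_contG2 : Continuous ffvG2 :=
  ((by continuity : Continuous fun φ : ℝ =>
    Real.cos φ ^ 7 * Real.sin φ ^ 2 * (2 * Real.cos φ ^ 2 + 3 * Real.sin φ ^ 2))).mul (ffv_contP _)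

private lemma ffv_contG4 : Continuous ffvG4 :=
  ((by continuity : Continuous fun φ : ℝ =>
    Real.cos φ ^ 4 * Real.sin φ ^ 4 * (2 * Real.cos φ ^ 2 + 3 * Real.sin φ ^ 2))).mul (ffv_contP _)

private lemma ffv_contG6 : Continuous ffvG6 :=
  ((by continuity : Continuous fun φ : ℝ =>
    Real.cos φ * Real.sin φ ^ 6 * (2 * Real.cos φ ^ 2 + 3 * Real.sin φ ^ 2))).mul (ffv_contP _)

/-- derivative identity giving the relation between the `c⁴s⁴` and `c¹⁰` integrals -/
private lemma ffv_key (θ : ℝ) :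
    HasDerivAt (fun t => Real.cos t ^ 5 * Real.sin t *
        (Real.cos t ^ 6 + Real.sin t ^ 4) ^ (-(13 : ℝ) / 12))
      ((1/2) * ffvG θ - (5/3) * ffvG4 θ) θ := by
  have hc := Real.hasDerivAt_cos θ
  have hs := Real.hasDerivAt_sin θ
  have hD : HasDerivAt (fun t => Real.cos t ^ 6 + Real.sin t ^ 4)
      ((↑(6:ℕ) * Real.cos θ ^ (6-1) * (-Real.sin θ)) + (↑(4:ℕ) * Real.sin θ ^ (4-1) * Real.cos θ)) θ :=
    (hc.pow 6).add (hs.pow 4)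
  have hR := hD.rpow_const (p := -(13:ℝ)/12) (Or.inl (ffv_Dpos θ).ne')
  have h1 : HasDerivAt (fun t => Real.cos t ^ 5 * Real.sin t)
      ((↑(5:ℕ) * Real.cos θ ^ (5-1) * (-Real.sin θ)) * Real.sin θ + Real.cos θ ^ 5 * Real.cos θ) θ :=
    (hc.pow 5).mul hs
  have h := h1.mul hR
  convert h using 1
  case e'_4 => rfl
  case e'_5 => rfl
  case e'_8 => rfl
  have he : (-(13:ℝ)/12) - 1 = -(25:ℝ)/12 := by norm_num
  have hAB : (Real.cos θ ^ 6 + Real.sin θ ^ 4) ^ (-(13:ℝ)/12)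
      = (Real.cos θ ^ 6 + Real.sin θ ^ 4) *
        (Real.cos θ ^ 6 + Real.sin θ ^ 4) ^ (-(25:ℝ)/12) := by
    rw [show (-(13:ℝ)/12) = 1 + (-(25:ℝ)/12) by norm_num,
      Real.rpow_add (ffv_Dpos θ), Real.rpow_one]
  rw [he, hAB]
  simp only [ffvG, ffvG4]
  push_cast
  norm_num
  ring

theorem first_focal_value (a22 a50 b13 b41 : ℝ) (u2 : ℝ → ℝ)
    (h0 : u2 0 = 0)
    (hderiv : ∀ θ : ℝ, HasDerivAt u2
      (Real.cos θ * (2 * Real.cos θ ^ 2 + 3 * Real.sin θ ^ 2) *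
        (3 * a50 * Real.cos θ ^ 9 + 3 * a22 * Real.cos θ ^ 6 * Real.sin θ ^ 2 +
          2 * b41 * Real.cos θ ^ 3 * Real.sin θ ^ 4 + 2 * b13 * Real.sin θ ^ 6) /
        (36 * (Real.cos θ ^ 6 + Real.sin θ ^ 4) ^ ((25 : ℝ) / 12))) θ) :
    u2 (2 * π) =
      (1 / 60) * (5 * a50 + b41) *
        ∫ φ in (0:ℝ)..(2 * π), Real.cos φ ^ 10 *
          (2 * Real.cos φ ^ 2 + 3 * Real.sin φ ^ 2) *
          (Real.cos φ ^ 6 + Real.sin φ ^ 4) ^ (-(25 : ℝ) / 12) := by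
  -- the derivative of u2 as a function
  set F : ℝ → ℝ := fun θ =>
      Real.cos θ * (2 * Real.cos θ ^ 2 + 3 * Real.sin θ ^ 2) *
        (3 * a50 * Real.cos θ ^ 9 + 3 * a22 * Real.cos θ ^ 6 * Real.sin θ ^ 2 +
          2 * b41 * Real.cos θ ^ 3 * Real.sin θ ^ 4 + 2 * b13 * Real.sin θ ^ 6) /
        (36 * (Real.cos θ ^ 6 + Real.sin θ ^ 4) ^ ((25 : ℝ) / 12)) with hF
  have hFc : Continuous F := by
    apply Continuous.div
    · continuity
    · exact continuous_const.mul (ffv_contP _)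
    · intro x
      exact (mul_pos (by norm_num) (Real.rpow_pos_of_pos (ffv_Dpos x) _)).ne'
  -- FTC
  have hFTC : ∫ θ in (0:ℝ)..(2*π), F θ = u2 (2*π) - u2 0 :=
    intervalIntegral.integral_eq_sub_of_hasDerivAt (fun x _ => hderiv x)
      (hFc.intervalIntegrable _ _)
  have h1 : u2 (2*π) = ∫ θ in (0:ℝ)..(2*π), F θ := by rw [hFTC, h0, sub_zero]
  -- decomposition of F into four pieces
  have hdecomp : F = fun θ =>
      (a50/12) * ffvG θ + (a22/12) * ffvG2 θ + (b41/18) * ffvG4 θ + (b13/18) * ffvG6 θ := by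
    funext θ
    have hD := ffv_Dpos θ
    have hne : (Real.cos θ ^ 6 + Real.sin θ ^ 4) ^ ((25:ℝ)/12) ≠ 0 :=
      (Real.rpow_pos_of_pos hD _).ne'
    have hinv : (Real.cos θ ^ 6 + Real.sin θ ^ 4) ^ (-(25:ℝ)/12)
        = ((Real.cos θ ^ 6 + Real.sin θ ^ 4) ^ ((25:ℝ)/12))⁻¹ := by
      rw [neg_div, Real.rpow_neg hD.le]
    simp only [hF, ffvG, ffvG2, ffvG4, ffvG6, hinv]
    field_simp
    ring
  -- integrability of the pieces
  have hIg : IntervalIntegrable ffvG MeasureTheory.volume (0:ℝ) (2*π) := ffv_contG.intervalIntegrable _ _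
  have hIg2 : IntervalIntegrable ffvG2 MeasureTheory.volume (0:ℝ) (2*π) := ffv_contG2.intervalIntegrable _ _
  have hIg4 : IntervalIntegrable ffvG4 MeasureTheory.volume (0:ℝ) (2*π) := ffv_contG4.intervalIntegrable _ _
  have hIg6 : IntervalIntegrable ffvG6 MeasureTheory.volume (0:ℝ) (2*π) := ffv_contG6.intervalIntegrable _ _
  -- split the integral
  have hsplit : ∫ θ in (0:ℝ)..(2*π), F θ
      = (a50/12) * (∫ θ in (0:ℝ)..(2*π), ffvG θ)
        + (a22/12) * (∫ θ in (0:ℝ)..(2*π), ffvG2 θ)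
        + (b41/18) * (∫ θ in (0:ℝ)..(2*π), ffvG4 θ)
        + (b13/18) * (∫ θ in (0:ℝ)..(2*π), ffvG6 θ) := by
    rw [hdecomp]
    rw [intervalIntegral.integral_add (((hIg.const_mul _).add (hIg2.const_mul _)).add
        (hIg4.const_mul _)) (hIg6.const_mul _),
      intervalIntegral.integral_add ((hIg.const_mul _).add (hIg2.const_mul _)) (hIg4.const_mul _),
      intervalIntegral.integral_add (hIg.const_mul _) (hIg2.const_mul _),
      intervalIntegral.integral_const_mul, intervalIntegral.integral_const_mul,
      intervalIntegral.integral_const_mul, intervalIntegral.integral_const_mul]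
  -- the two odd integrals vanish
  have hg2zero : (∫ θ in (0:ℝ)..(2*π), ffvG2 θ) = 0 := by
    apply ffv_odd _ ffv_contG2
    intro x
    simp only [ffvG2, cos_add_pi, sin_add_pi]
    have hb : (-Real.cos x) ^ 6 + (-Real.sin x) ^ 4 = Real.cos x ^ 6 + Real.sin x ^ 4 := by ring
    rw [hb]
    ring
  have hg6zero : (∫ θ in (0:ℝ)..(2*π), ffvG6 θ) = 0 := by
    apply ffv_odd _ ffv_contG6
    intro x
    simp only [ffvG6, cos_add_pi, sin_add_pi]
    have hb : (-Real.cos x) ^ 6 + (-Real.sin x) ^ 4 = Real.cos x ^ 6 + Real.sin x ^ 4 := by ring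
    rw [hb]
    ring
  -- the key relation between the two remaining integrals
  have hkeyint : ∫ θ in (0:ℝ)..(2*π), ((1/2) * ffvG θ - (5/3) * ffvG4 θ) = 0 := by
    have := intervalIntegral.integral_eq_sub_of_hasDerivAt (a := 0) (b := 2*π)
      (fun x _ => ffv_key x)
      (((continuous_const.mul ffv_contG).sub (continuous_const.mul ffv_contG4)).intervalIntegrable _ _)
    rw [this]
    norm_num [Real.sin_two_pi]
  have hg4eq : (∫ θ in (0:ℝ)..(2*π), ffvG4 θ) = (3/10) * ∫ θ in (0:ℝ)..(2*π), ffvG θ := by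
    rw [intervalIntegral.integral_sub (hIg.const_mul _) (hIg4.const_mul _),
      intervalIntegral.integral_const_mul, intervalIntegral.integral_const_mul] at hkeyint
    linarith
  -- assemble
  have hGoal : (∫ φ in (0:ℝ)..(2 * π), Real.cos φ ^ 10 *
      (2 * Real.cos φ ^ 2 + 3 * Real.sin φ ^ 2) *
      (Real.cos φ ^ 6 + Real.sin φ ^ 4) ^ (-(25 : ℝ) / 12))
      = ∫ θ in (0:ℝ)..(2*π), ffvG θ := rfl
  rw [hGoal, h1, hsplit, hg2zero, hg6zero, hg4eq]
  ring
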